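/- Let k ≥ 2 and let A be a family of subsets of [n] that is a strong k-wise eventown but not a (k+1)-wise eventown. Then |A| ≤ 2^(⌊n/2⌋ − (2^k − k − 2)). -/

import Mathlib

open Finset Module

namespace EventownAux

variable {n : ℕ}

def cv (A : Finset (Fin n)) : Fin n → ZMod 2 := fun i => if i ∈ A then 1 else 0

def dform (n : ℕ) : (Fin n → ZMod 2) →ₗ[ZMod 2] (Fin n → ZMod 2) →ₗ[ZMod 2] ZMod 2 :=
  LinearMap.mk₂ (ZMod 2) dotProduct
    add_dotProduct smul_dotProduct dotProduct_add dotProduct_smul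

lemma dform_apply (x y : Fin n → ZMod 2) : dform n x y = dotProduct x y := rfl

lemma dform_comm (x y : Fin n → ZMod 2) : dform n x y = dform n y x :=
  dotProduct_comm x y

lemma dform_cv (A C : Finset (Fin n)) :
    dform n (cv A) (cv C) = ((A ∩ C).card : ZMod 2) := by
  classical
  rw [dform_apply, dotProduct]
  have h : ∀ i, cv A i * cv C i = if i ∈ A ∩ C then (1 : ZMod 2) else 0 := by
    intro i
    by_cases hA : i ∈ A <;> by_cases hC : i ∈ C <;> simp [cv, hA, hC]
  rw [Finset.sum_congr rfl fun i _ => h i, Finset.sum_ite_mem, Finset.univ_inter,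
    Finset.sum_const, nsmul_eq_mul, mul_one]

lemma even_cast_zmod2 {m : ℕ} (h : Even m) : (m : ZMod 2) = 0 := by
  obtain ⟨j, rfl⟩ := h
  push_cast
  ring_nf
  rw [show (2 : ZMod 2) = 0 by decide, mul_zero]

lemma odd_cast_zmod2 {m : ℕ} (h : Odd m) : (m : ZMod 2) = 1 := by
  obtain ⟨j, rfl⟩ := h
  push_cast
  rw [show (2 : ZMod 2) = 0 by decide]
  ring

lemma cv_injective : Function.Injective (cv (n := n)) := by
  intro A C h
  ext i
  have := congrFun h i
  by_cases hA : i ∈ A <;> by_cases hC : i ∈ C <;> simp_all [cv]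

lemma dform_injective : Function.Injective (dform n) := by
  intro x y h
  ext i
  have := congrFun (congrArg (fun f => f.toFun) h) (Pi.single i 1)
  simpa [dform_apply, dotProduct_single] using this

lemma finrank_isotropic_le (U : Submodule (ZMod 2) (Fin n → ZMod 2))
    (h : ∀ x ∈ U, ∀ y ∈ U, dform n x y = 0) :
    2 * finrank (ZMod 2) U ≤ n := by
  classical
  set Φ : (Fin n → ZMod 2) →ₗ[ZMod 2] Module.Dual (ZMod 2) U :=
    U.dualRestrict.comp (dform n) with hΦ
  have hsurj : Function.Surjective Φ := by
    have heq : finrank (ZMod 2) (Fin n → ZMod 2) =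
        finrank (ZMod 2) (Module.Dual (ZMod 2) (Fin n → ZMod 2)) :=
      (Subspace.dual_finrank_eq).symm
    have h2 : Function.Surjective (dform n) :=
      (LinearMap.injective_iff_surjective_of_finrank_eq_finrank heq).mp dform_injective
    intro φ
    obtain ⟨ψ, hψ⟩ := Subspace.dualRestrict_surjective (W := U) φ
    obtain ⟨x, hx⟩ := h2 ψ
    exact ⟨x, by rw [hΦ, LinearMap.comp_apply, hx, hψ]⟩
  have hker : U ≤ LinearMap.ker Φ := by
    intro x hx
    rw [LinearMap.mem_ker]
    ext ⟨y, hy⟩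
    exact h x hx y hy
  have hrn : finrank (ZMod 2) (LinearMap.range Φ) + finrank (ZMod 2) (LinearMap.ker Φ)
      = finrank (ZMod 2) (Fin n → ZMod 2) := LinearMap.finrank_range_add_finrank_ker Φ
  have hrange : LinearMap.range Φ = ⊤ := LinearMap.range_eq_top.mpr hsurj
  have hdual : finrank (ZMod 2) (Module.Dual (ZMod 2) U) = finrank (ZMod 2) U :=
    Subspace.dual_finrank_eq
  have hV : finrank (ZMod 2) (Fin n → ZMod 2) = n := by
    simp [Module.finrank_pi]
  have hUle : finrank (ZMod 2) U ≤ finrank (ZMod 2) (LinearMap.ker Φ) :=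
    Submodule.finrank_mono hker
  rw [hrange] at hrn
  rw [finrank_top] at hrn
  omega

lemma span_isotropic (G : Set (Fin n → ZMod 2))
    (h : ∀ x ∈ G, ∀ y ∈ G, dform n x y = 0) :
    ∀ x ∈ Submodule.span (ZMod 2) G, ∀ y ∈ Submodule.span (ZMod 2) G, dform n x y = 0 := by
  intro x hx y hy
  induction hx, hy using Submodule.span_induction₂ with
  | mem_mem u v hu hv => exact h u hu v hv
  | zero_left v hv => simp
  | zero_right u hu => simp
  | add_left u₁ u₂ v h1 h2 h3 ih1 ih2 => simp [map_add, LinearMap.add_apply, ih1, ih2]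
  | add_right u v₁ v₂ h1 h2 h3 ih1 ih2 => simp [map_add, ih1, ih2]
  | smul_left a u v h1 h2 ih => simp [map_smul, LinearMap.smul_apply, ih]
  | smul_right a u v h1 h2 ih => simp [map_smul, ih]

lemma card_T_filter {k : ℕ} (hk : 2 ≤ k) :
    (Finset.univ.filter fun T : Finset (Fin k) => 2 ≤ T.card ∧ T.card < k).card
      = 2 ^ k - k - 2 := by
  classical
  have htotal : (Finset.univ.filter fun T : Finset (Fin k) => 2 ≤ T.card ∧ T.card < k).card
      + (Finset.univ.filter fun T : Finset (Fin k) => ¬(2 ≤ T.card ∧ T.card < k)).card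
      = 2 ^ k := by
    rw [Finset.card_filter_add_card_filter_not, Finset.card_univ, Fintype.card_finset,
      Fintype.card_fin]
  have hcompl : (Finset.univ.filter fun T : Finset (Fin k) => ¬(2 ≤ T.card ∧ T.card < k))
      = insert (Finset.univ : Finset (Fin k))
          (insert (∅ : Finset (Fin k)) (Finset.univ.image fun i : Fin k => ({i} : Finset (Fin k)))) := by
    ext T
    simp only [Finset.mem_filter, Finset.mem_univ, true_and, Finset.mem_insert,
      Finset.mem_image, not_and, not_lt]
    constructor
    · intro h
      rcases Nat.lt_or_ge T.card 2 with h2 | h2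
      · interval_cases hT : T.card
        · right; left; exact Finset.card_eq_zero.mp hT
        · obtain ⟨a, ha⟩ := Finset.card_eq_one.mp hT
          right; right; exact ⟨a, by simp [ha]⟩
      · have hge := h h2
        have hle : T.card ≤ k := by
          simpa using Finset.card_le_card (Finset.subset_univ T)
        have hceq : T.card = k := le_antisymm hle hge
        left
        exact Finset.eq_univ_of_card T (by simp [hceq])
    · rintro (rfl | rfl | ⟨i, -, rfl⟩) <;> intro h2 <;> simp_all
  have hcard : (insert (Finset.univ : Finset (Fin k))
          (insert (∅ : Finset (Fin k)) (Finset.univ.image fun i : Fin k => ({i} : Finset (Fin k))))).card = k + 2 := by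
    rw [Finset.card_insert_of_notMem, Finset.card_insert_of_notMem,
      Finset.card_image_of_injective _ Finset.singleton_injective, Finset.card_univ,
      Fintype.card_fin]
    · simp only [Finset.mem_image, Finset.mem_univ, true_and, not_exists]
      intro i h
      exact Finset.singleton_ne_empty i h
    · simp only [Finset.mem_insert, Finset.mem_image, Finset.mem_univ, true_and, not_or,
        not_exists]
      constructor
      · intro h
        have : (0 : ℕ) = k := by simpa using congrArg Finset.card h.symm
        omega
      · intro i h
        have : (1 : ℕ) = k := by simpa using congrArg Finset.card h
        omega
  rw [hcompl, hcard] at htotal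
  omega

end EventownAux

open EventownAux in
/-- A strong k-wise eventown that is not a (k+1)-wise eventown has size at most
2^(⌊n/2⌋ - (2^k - k - 2)). -/
theorem strong_kwise_not_succ_bound (n k : ℕ) (hk : 2 ≤ k) (𝒜 : Finset (Finset (Fin n)))
    (hstrong : ∀ k', 1 ≤ k' → k' ≤ k → ∀ S : Finset (Finset (Fin n)), S ⊆ 𝒜 →
      S.card = k' → Even (S.inf id).card)
    (hnot : ∃ S : Finset (Finset (Fin n)), S ⊆ 𝒜 ∧ S.card = k + 1 ∧ Odd (S.inf id).card) :
    𝒜.card * 2 ^ (2 ^ k - k - 2) ≤ 2 ^ (n / 2) := by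
  classical
  obtain ⟨S, hS𝒜, hScard, hSodd⟩ := hnot
  have hcardS : Fintype.card ↥S = k + 1 := by rw [Fintype.card_coe, hScard]
  set e : ↥S ≃ Fin (k + 1) := Fintype.equivFinOfCardEq hcardS with he
  set B : Fin (k + 1) → Finset (Fin n) := fun i => (e.symm i : Finset (Fin n)) with hB
  have hBinj : Function.Injective B := by
    intro i j hij
    exact e.symm.injective (Subtype.ext hij)
  have hBS : ∀ i, B i ∈ S := fun i => (e.symm i).2
  have hBmem : ∀ i, B i ∈ 𝒜 := fun i => hS𝒜 (hBS i)
  have himageS : Finset.univ.image B = S := by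
    apply Finset.eq_of_subset_of_card_le
    · intro x hx
      obtain ⟨i, _, rfl⟩ := Finset.mem_image.mp hx
      exact hBS i
    · rw [hScard, Finset.card_image_of_injective _ hBinj, Finset.card_univ, Fintype.card_fin]
  -- Parity facts
  have keyEven : ∀ Tm : Finset (Fin (k + 1)), Tm.Nonempty → Tm.card ≤ k →
      Even ((Tm.inf B).card) := by
    intro Tm hne hcard
    have h1 : (Tm.image B).inf id = Tm.inf B := by
      rw [Finset.inf_image]
      rfl
    have h2 : (Tm.image B).card = Tm.card := Finset.card_image_of_injective _ hBinj
    have h3 := hstrong Tm.card (Finset.card_pos.mpr hne) hcard (Tm.image B)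
      (fun x hx => by
        obtain ⟨i, _, rfl⟩ := Finset.mem_image.mp hx
        exact hBmem i) h2
    rwa [h1] at h3
  have keyOdd : Odd ((Finset.univ.inf B).card) := by
    have h1 : (Finset.univ.image B).inf id = Finset.univ.inf B := by
      rw [Finset.inf_image]
      rfl
    have := hSodd
    rw [← himageS, h1] at this
    exact this
  have keyA : ∀ A ∈ 𝒜, ∀ Tm : Finset (Fin (k + 1)), Tm.Nonempty → Tm.card < k →
      Even ((A ∩ Tm.inf B).card) := by
    intro A hA Tm hne hcard
    by_cases hmem : A ∈ Tm.image B
    · obtain ⟨j, hj, rfl⟩ := Finset.mem_image.mp hmem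
      have hle : Tm.inf B ⊆ B j := Finset.inf_le hj
      rw [Finset.inter_eq_right.mpr hle]
      exact keyEven Tm hne (le_of_lt hcard)
    · have h1 : (insert A (Tm.image B)).inf id = A ∩ Tm.inf B := by
        rw [Finset.inf_insert, Finset.inf_image]
        rfl
      have h2 : (insert A (Tm.image B)).card = Tm.card + 1 := by
        rw [Finset.card_insert_of_notMem hmem, Finset.card_image_of_injective _ hBinj]
      have h3 := hstrong (Tm.card + 1) (by omega) (by omega) _
        (by
          intro x hx
          rcases Finset.mem_insert.mp hx with rfl | hx'
          · exact hA
          · obtain ⟨i, _, rfl⟩ := Finset.mem_image.mp hx'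
            exact hBmem i) h2
      rwa [h1] at h3
  -- index machinery
  set mc : Finset (Fin k) → Finset (Fin (k + 1)) :=
    fun T => T.map Fin.castSuccEmb with hmc
  have hmcard : ∀ T, (mc T).card = T.card := fun T => Finset.card_map _
  have hlastmc : ∀ T, Fin.last k ∉ mc T := by
    intro T hmem
    obtain ⟨j, _, hj⟩ := Finset.mem_map.mp hmem
    exact (Fin.castSucc_lt_last j).ne hj
  have hmunion : ∀ T T', mc (T ∪ T') = mc T ∪ mc T' := fun T T' => Finset.map_union T T'
  have hmem_mc : ∀ T (j : Fin k), Fin.castSucc j ∈ mc T ↔ j ∈ T := by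
    intro T j
    simp only [hmc, Finset.mem_map]
    constructor
    · rintro ⟨j', hj', hj'eq⟩
      have : j' = j := Fin.castSucc_injective k hj'eq
      rwa [← this]
    · intro hj
      exact ⟨j, hj, rfl⟩
  have hmuniv : insert (Fin.last k) (mc Finset.univ) = Finset.univ := by
    apply Finset.eq_univ_of_forall
    intro i
    rcases Fin.eq_castSucc_or_eq_last i with ⟨j, rfl⟩ | rfl
    · exact Finset.mem_insert_of_mem ((hmem_mc Finset.univ j).mpr (Finset.mem_univ j))
    · exact Finset.mem_insert_self _ _
  set uvec : Finset (Fin k) → (Fin n → ZMod 2) := fun T => cv ((mc T).inf B) with huvec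
  set Rm : Finset (Fin k) → Finset (Fin (k + 1)) :=
    fun T => insert (Fin.last k) (mc Tᶜ) with hRm
  set rvec : Finset (Fin k) → (Fin n → ZMod 2) := fun T => cv ((Rm T).inf B) with hrvec
  set 𝒯 : Finset (Finset (Fin k)) :=
    Finset.univ.filter (fun T => 2 ≤ T.card ∧ T.card < k) with h𝒯
  have hRmcard : ∀ T : Finset (Fin k), (Rm T).card = (k - T.card) + 1 := by
    intro T
    rw [hRm]
    rw [Finset.card_insert_of_notMem (hlastmc Tᶜ), hmcard, Finset.card_compl,
      Fintype.card_fin]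
  -- the union computation
  have hunion_inf : ∀ T T0 : Finset (Fin k),
      (mc T).inf B ∩ (Rm T0).inf B = (insert (Fin.last k) (mc (T ∪ T0ᶜ))).inf B := by
    intro T T0
    have : mc T ∪ Rm T0 = insert (Fin.last k) (mc (T ∪ T0ᶜ)) := by
      rw [hRm, Finset.union_insert, hmunion]
    rw [← this, Finset.inf_union, Finset.inf_eq_inter]
  -- the matrix fact
  have hMat : ∀ T T0 : Finset (Fin k), T0.card < k →
      dform n (uvec T) (rvec T0) = if T0 ⊆ T then 1 else 0 := by
    intro T T0 hT0k
    rw [huvec, hrvec, dform_cv, hunion_inf]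
    by_cases hsub : T0 ⊆ T
    · have huniv : T ∪ T0ᶜ = Finset.univ := by
        apply Finset.eq_univ_of_forall
        intro j
        by_cases hj : j ∈ T0
        · exact Finset.mem_union_left _ (hsub hj)
        · exact Finset.mem_union_right _ (Finset.mem_compl.mpr hj)
      rw [if_pos hsub, huniv, hmuniv]
      exact odd_cast_zmod2 keyOdd
    · obtain ⟨j, hjT0, hjT⟩ := Finset.not_subset.mp hsub
      rw [if_neg hsub]
      apply even_cast_zmod2
      apply keyEven _ ⟨Fin.last k, Finset.mem_insert_self _ _⟩
      have hne : insert (Fin.last k) (mc (T ∪ T0ᶜ)) ≠ Finset.univ := by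
        intro hcontra
        have hjmem : Fin.castSucc j ∈ insert (Fin.last k) (mc (T ∪ T0ᶜ)) := by
          rw [hcontra]; exact Finset.mem_univ _
        rcases Finset.mem_insert.mp hjmem with heq | hmem
        · exact (Fin.castSucc_lt_last j).ne heq
        · rcases Finset.mem_union.mp ((hmem_mc _ j).mp hmem) with h | h
          · exact hjT h
          · exact (Finset.mem_compl.mp h) hjT0
      have := (Finset.card_lt_iff_ne_univ _).mpr hne
      rw [Fintype.card_fin] at this
      omega
  -- rvec is orthogonal to all of 𝒜's vectors
  have hAr : ∀ A ∈ 𝒜, ∀ T0 ∈ 𝒯, dform n (cv A) (rvec T0) = 0 := by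
    intro A hA T0 hT0
    obtain ⟨hT02, hT0k⟩ := (Finset.mem_filter.mp hT0).2
    rw [hrvec, dform_cv]
    apply even_cast_zmod2
    apply keyA A hA (Rm T0) ⟨Fin.last k, Finset.mem_insert_self _ _⟩
    rw [hRmcard]
    omega
  -- orthogonality of generators
  have hWgen : ∀ A ∈ 𝒜, ∀ A' ∈ 𝒜, dform n (cv A) (cv A') = 0 := by
    intro A hA A' hA'
    rw [dform_cv]
    apply even_cast_zmod2
    by_cases hEq : A = A'
    · subst hEq
      have h3 := hstrong 1 le_rfl (by omega) {A} (by simpa using hA) (Finset.card_singleton A)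
      simpa using h3
    · have h3 := hstrong 2 (by omega) hk {A, A'}
        (by
          intro x hx
          rcases Finset.mem_insert.mp hx with rfl | hx'
          · exact hA
          · rw [Finset.mem_singleton.mp hx']
            exact hA') (Finset.card_pair hEq)
      simpa [Finset.inf_insert] using h3
  have hWX : ∀ A ∈ 𝒜, ∀ T ∈ 𝒯, dform n (cv A) (uvec T) = 0 := by
    intro A hA T hT
    obtain ⟨hT2, hTk⟩ := (Finset.mem_filter.mp hT).2
    rw [huvec, dform_cv]
    apply even_cast_zmod2
    apply keyA A hA (mc T)
    · rw [← Finset.card_pos, hmcard]; omega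
    · rw [hmcard]; omega
  have hXX : ∀ T ∈ 𝒯, ∀ T' ∈ 𝒯, dform n (uvec T) (uvec T') = 0 := by
    intro T hT T' hT'
    obtain ⟨hT2, hTk⟩ := (Finset.mem_filter.mp hT).2
    rw [huvec, dform_cv]
    have hint : (mc T).inf B ∩ (mc T').inf B = (mc (T ∪ T')).inf B := by
      rw [hmunion, Finset.inf_union, Finset.inf_eq_inter]
    rw [hint]
    apply even_cast_zmod2
    apply keyEven
    · rw [← Finset.card_pos, hmcard]
      have := Finset.card_le_card (Finset.subset_union_left (s₁ := T) (s₂ := T'))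
      omega
    · rw [hmcard]
      have h := Finset.card_le_univ (T ∪ T')
      rwa [Fintype.card_fin] at h
  -- linear algebra setup
  set W : Submodule (ZMod 2) (Fin n → ZMod 2) :=
    Submodule.span (ZMod 2) (cv '' (𝒜 : Set (Finset (Fin n)))) with hW
  set ufam : {T // T ∈ 𝒯} → (Fin n → ZMod 2) := fun T => uvec T.val with hufam
  set Xsp : Submodule (ZMod 2) (Fin n → ZMod 2) :=
    Submodule.span (ZMod 2) (Set.range ufam) with hXsp
  set Ψ : (Fin n → ZMod 2) →ₗ[ZMod 2] ({T // T ∈ 𝒯} → ZMod 2) :=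
    LinearMap.pi (fun T0 => (dform n).flip (rvec T0.val)) with hΨ
  have hΨapp : ∀ (x : Fin n → ZMod 2) (T0 : {T // T ∈ 𝒯}),
      Ψ x T0 = dform n x (rvec T0.val) := by
    intro x T0
    rfl
  have hΨA : ∀ A ∈ 𝒜, Ψ (cv A) = 0 := by
    intro A hA
    ext T0
    rw [hΨapp, hAr A hA T0.val T0.2]
    rfl
  -- linear independence of the images
  have hindep : LinearIndependent (ZMod 2) (fun T : {T // T ∈ 𝒯} => Ψ (ufam T)) := by
    rw [Fintype.linearIndependent_iff]
    intro g hg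
    by_contra hcon
    push_neg at hcon
    obtain ⟨T1, hT1⟩ := hcon
    set supp : Finset {T // T ∈ 𝒯} :=
      Finset.univ.filter (fun T => g T ≠ 0) with hsupp
    have hne : supp.Nonempty := ⟨T1, by simp [hsupp, hT1]⟩
    obtain ⟨T0, hT0mem, hT0max⟩ := supp.exists_maximal hne
    have hterm : ∀ T : {T // T ∈ 𝒯}, Ψ (ufam T) T0 =
        if T0.val ⊆ T.val then (1 : ZMod 2) else 0 := by
      intro T
      rw [hΨapp]
      exact hMat T.val T0.val (Finset.mem_filter.mp T0.2).2.2
    have h2 : (∑ T, g T • Ψ (ufam T)) T0 = 0 := by rw [hg]; rfl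
    rw [Finset.sum_apply] at h2
    simp only [Pi.smul_apply, smul_eq_mul, hterm] at h2
    rw [Finset.sum_eq_single T0] at h2
    · exact (Finset.mem_filter.mp hT0mem).2 (by simpa using h2)
    · intro T _ hTne
      by_cases hsub : T0.val ⊆ T.val
      · by_cases hgT : g T = 0
        · rw [hgT, zero_mul]
        · exfalso
          have hvne : T0.val ≠ T.val := fun h => hTne (Subtype.ext h).symm
          have hle := hT0max (y := T) (by simp [hsupp, hgT]) hsub
          exact hvne (le_antisymm hsub hle)
      · rw [if_neg hsub, mul_zero]
    · intro habs
      exact absurd (Finset.mem_univ T0) habs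
  have hufam_indep : LinearIndependent (ZMod 2) ufam :=
    LinearIndependent.of_comp Ψ hindep
  have hXrank : finrank (ZMod 2) Xsp = 𝒯.card := by
    rw [hXsp, finrank_span_eq_card hufam_indep, Fintype.card_coe]
  have hWker : W ≤ LinearMap.ker Ψ := by
    rw [hW, Submodule.span_le]
    rintro x ⟨A, hA, rfl⟩
    exact LinearMap.mem_ker.mpr (hΨA A hA)
  have hdisj : W ⊓ Xsp = ⊥ := by
    rw [Submodule.eq_bot_iff]
    rintro x ⟨hxW, hxX⟩
    rw [hXsp] at hxX
    obtain ⟨c, hc⟩ := (Submodule.mem_span_range_iff_exists_fun (ZMod 2)).mp hxX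
    have hΨx : Ψ x = 0 := hWker hxW
    rw [← hc, map_sum] at hΨx
    simp only [map_smul] at hΨx
    have hzero := Fintype.linearIndependent_iff.mp hindep c hΨx
    rw [← hc]
    simp [hzero]
  have hsum : finrank (ZMod 2) ↥(W ⊔ Xsp) = finrank (ZMod 2) W + 𝒯.card := by
    have h5 := Submodule.finrank_sup_add_finrank_inf_eq W Xsp
    rw [hdisj, finrank_bot, hXrank] at h5
    omega
  -- isotropy of the sum
  have hiso : ∀ x ∈ W ⊔ Xsp, ∀ y ∈ W ⊔ Xsp, dform n x y = 0 := by
    have hUspan : W ⊔ Xsp =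
        Submodule.span (ZMod 2) ((cv '' (𝒜 : Set (Finset (Fin n)))) ∪ Set.range ufam) := by
      rw [Submodule.span_union, hW, hXsp]
    intro x hx y hy
    rw [hUspan] at hx hy
    refine span_isotropic _ ?_ x hx y hy
    rintro a (⟨A, hA, rfl⟩ | ⟨T, rfl⟩) b (⟨A', hA', rfl⟩ | ⟨T', rfl⟩)
    · exact hWgen A hA A' hA'
    · exact hWX A hA T'.val T'.2
    · rw [dform_comm]
      exact hWX A' hA' T.val T.2
    · exact hXX T.val T.2 T'.val T'.2
  have hfr : 2 * finrank (ZMod 2) ↥(W ⊔ Xsp) ≤ n := finrank_isotropic_le _ hiso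
  -- counting
  have hWcard : 𝒜.card ≤ 2 ^ finrank (ZMod 2) W := by
    have : Fintype ↥W := Fintype.ofFinite _
    have hinj : Function.Injective
        (fun a : {x // x ∈ 𝒜} =>
          (⟨cv a.val, Submodule.subset_span ⟨a.val, a.2, rfl⟩⟩ : ↥W)) := by
      intro a b hab
      have h6 := congrArg Subtype.val hab
      exact Subtype.ext (cv_injective h6)
    have hle := Fintype.card_le_of_injective _ hinj
    rw [Fintype.card_coe] at hle
    calc 𝒜.card ≤ Fintype.card ↥W := hle
      _ = 2 ^ finrank (ZMod 2) ↥W := by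
          rw [card_eq_pow_finrank (K := ZMod 2) (V := ↥W), ZMod.card]
  have h𝒯card : 𝒯.card = 2 ^ k - k - 2 := card_T_filter hk
  have hfinal : finrank (ZMod 2) W + 𝒯.card ≤ n / 2 := by
    rw [Nat.le_div_iff_mul_le (by norm_num : 0 < 2)]
    omega
  calc 𝒜.card * 2 ^ (2 ^ k - k - 2) = 𝒜.card * 2 ^ 𝒯.card := by rw [h𝒯card]
    _ ≤ 2 ^ finrank (ZMod 2) W * 2 ^ 𝒯.card :=
        Nat.mul_le_mul_right _ hWcard
    _ = 2 ^ (finrank (ZMod 2) W + 𝒯.card) := (pow_add 2 _ _).symm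
    _ ≤ 2 ^ (n / 2) := Nat.pow_le_pow_right (by norm_num) hfinal
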